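/- The Sklyanin-type factorized structure of the deformed double Yangian: the R-matrix R_{V8}(β;r), written in the form Id⊗Id + Σ_{α=1}^{3} W_α σ_α⊗σ_α with Pauli matrices σ_α, has structure constants J_{αβ} = (W_α²−W_β²)/(W_γ²−1) independent of β, given by J₁₂ = −J₃₁ = tan²(π/2r) and J₂₃ = 0. -/

import Mathlib

open Matrix Complex

/-- Kronecker product of two 2×2 matrices as a 4×4 matrix,
basis ordering (11,12,21,22). -/
def kron (A B : Matrix (Fin 2) (Fin 2) ℂ) : Matrix (Fin 4) (Fin 4) ℂ :=
  Matrix.of fun i j =>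
    A ⟨i.val / 2, by have := i.isLt; omega⟩ ⟨j.val / 2, by have := j.isLt; omega⟩ *
    B ⟨i.val % 2, by omega⟩ ⟨j.val % 2, by omega⟩

def sigma1 : Matrix (Fin 2) (Fin 2) ℂ := !![0, 1; 1, 0]
noncomputable def sigma2 : Matrix (Fin 2) (Fin 2) ℂ := !![0, -I; I, 0]
def sigma3 : Matrix (Fin 2) (Fin 2) ℂ := !![1, 0; 0, -1]

/-- Entries of `R_{V8}(β;r)` in the variables `s1 = sin x`, `c1 = cos x`,
`s2 = sin y`, `c2 = cos y`, `x = iβ/2r`, `y = π/2r`. -/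
noncomputable def aE (s1 c1 s2 c2 : ℂ) : ℂ := c1 * c2 / (c1 * c2 - s1 * s2)
noncomputable def dE (s1 c1 s2 c2 : ℂ) : ℂ := -(s1 * s2) / (c1 * c2 - s1 * s2)
noncomputable def bE (s1 c1 s2 c2 : ℂ) : ℂ := s1 * c2 / (s1 * c2 + c1 * s2)
noncomputable def cE (s1 c1 s2 c2 : ℂ) : ℂ := c1 * s2 / (s1 * c2 + c1 * s2)

/-- The eight-vertex deformed double Yangian R-matrix `R_{V8}(β;r)`. -/
noncomputable def RV8 (s1 c1 s2 c2 : ℂ) : Matrix (Fin 4) (Fin 4) ℂ :=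
  !![aE s1 c1 s2 c2, 0, 0, dE s1 c1 s2 c2;
     0, bE s1 c1 s2 c2, cE s1 c1 s2 c2, 0;
     0, cE s1 c1 s2 c2, bE s1 c1 s2 c2, 0;
     dE s1 c1 s2 c2, 0, 0, aE s1 c1 s2 c2]

/-- The coefficients of the decomposition `R = w₀·Id⊗Id + Σ_α w_α σ_α⊗σ_α`. -/
noncomputable def w0 (s1 c1 s2 c2 : ℂ) : ℂ := (aE s1 c1 s2 c2 + bE s1 c1 s2 c2) / 2
noncomputable def w1 (s1 c1 s2 c2 : ℂ) : ℂ := (cE s1 c1 s2 c2 + dE s1 c1 s2 c2) / 2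
noncomputable def w2 (s1 c1 s2 c2 : ℂ) : ℂ := (cE s1 c1 s2 c2 - dE s1 c1 s2 c2) / 2
noncomputable def w3 (s1 c1 s2 c2 : ℂ) : ℂ := (aE s1 c1 s2 c2 - bE s1 c1 s2 c2) / 2

/-- The normalized coefficients `W_α := w_α/w₀`. -/
noncomputable def W1 (s1 c1 s2 c2 : ℂ) : ℂ := w1 s1 c1 s2 c2 / w0 s1 c1 s2 c2
noncomputable def W2 (s1 c1 s2 c2 : ℂ) : ℂ := w2 s1 c1 s2 c2 / w0 s1 c1 s2 c2
noncomputable def W3 (s1 c1 s2 c2 : ℂ) : ℂ := w3 s1 c1 s2 c2 / w0 s1 c1 s2 c2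

/-- The Sklyanin-type factorized structure of the deformed double Yangian:
`R_{V8} = w₀·Id⊗Id + Σ_α w_α σ_α⊗σ_α`, and the structure constants
`J_{αβ} = (W_α²−W_β²)/(W_γ²−1)` are independent of `β` (i.e. of `x`), with
`J₁₂ = −J₃₁ = tan²(π/2r) = s2²/c2²` and `J₂₃ = 0`. -/
theorem stmt18 (s1 c1 s2 c2 : ℂ)
    (hpy1 : s1 ^ 2 + c1 ^ 2 = 1) (hpy2 : s2 ^ 2 + c2 ^ 2 = 1)
    (hden1 : c1 * c2 - s1 * s2 ≠ 0) (hden2 : s1 * c2 + c1 * s2 ≠ 0)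
    (hc2 : c2 ≠ 0) (hw0 : w0 s1 c1 s2 c2 ≠ 0)
    (hW1 : W1 s1 c1 s2 c2 ^ 2 - 1 ≠ 0)
    (hW2 : W2 s1 c1 s2 c2 ^ 2 - 1 ≠ 0)
    (hW3 : W3 s1 c1 s2 c2 ^ 2 - 1 ≠ 0) :
    RV8 s1 c1 s2 c2 =
        w0 s1 c1 s2 c2 • (1 : Matrix (Fin 4) (Fin 4) ℂ) +
        w1 s1 c1 s2 c2 • kron sigma1 sigma1 +
        w2 s1 c1 s2 c2 • kron sigma2 sigma2 +
        w3 s1 c1 s2 c2 • kron sigma3 sigma3 ∧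
    (W1 s1 c1 s2 c2 ^ 2 - W2 s1 c1 s2 c2 ^ 2) / (W3 s1 c1 s2 c2 ^ 2 - 1) =
        s2 ^ 2 / c2 ^ 2 ∧
    (W3 s1 c1 s2 c2 ^ 2 - W1 s1 c1 s2 c2 ^ 2) / (W2 s1 c1 s2 c2 ^ 2 - 1) =
        -(s2 ^ 2 / c2 ^ 2) ∧
    (W2 s1 c1 s2 c2 ^ 2 - W3 s1 c1 s2 c2 ^ 2) / (W1 s1 c1 s2 c2 ^ 2 - 1) = 0 := by
  have hD : (2 : ℂ) * (c1 * c2 - s1 * s2) * (s1 * c2 + c1 * s2) ≠ 0 := by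
    simp [hden1, hden2]
  obtain ⟨A, hA⟩ : ∃ A : ℂ, A = (c1 ^ 2 - s1 ^ 2) * c2 - 2 * s1 * c1 * s2 := ⟨_, rfl⟩
  obtain ⟨B, hB⟩ : ∃ B : ℂ, B = 2 * s1 * c1 * c2 + (c1 ^ 2 - s1 ^ 2) * s2 := ⟨_, rfl⟩
  have h0 : w0 s1 c1 s2 c2 = c2 * B / (2 * (c1 * c2 - s1 * s2) * (s1 * c2 + c1 * s2)) := by
    rw [w0, aE, bE, div_add_div _ _ hden1 hden2, div_div]
    rw [div_eq_div_iff (by simp [hden1, hden2]) hD]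
    rw [hB]; ring
  have h1 : w1 s1 c1 s2 c2 = s2 * A / (2 * (c1 * c2 - s1 * s2) * (s1 * c2 + c1 * s2)) := by
    rw [w1, cE, dE, div_add_div _ _ hden2 hden1, div_div]
    rw [div_eq_div_iff (by simp [hden1, hden2]) hD]
    rw [hA]; ring
  have h2 : w2 s1 c1 s2 c2 = s2 * c2 / (2 * (c1 * c2 - s1 * s2) * (s1 * c2 + c1 * s2)) := by
    rw [w2, cE, dE, div_sub_div _ _ hden2 hden1, div_div]
    rw [div_eq_div_iff (by simp [hden1, hden2]) hD]
    linear_combination (2 * (c1 * c2 - s1 * s2) * (s1 * c2 + c1 * s2) * s2 * c2) * hpy1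
  have h3 : w3 s1 c1 s2 c2 = s2 * c2 / (2 * (c1 * c2 - s1 * s2) * (s1 * c2 + c1 * s2)) := by
    rw [w3, aE, bE, div_sub_div _ _ hden1 hden2, div_div]
    rw [div_eq_div_iff (by simp [hden1, hden2]) hD]
    linear_combination (2 * (c1 * c2 - s1 * s2) * (s1 * c2 + c1 * s2) * s2 * c2) * hpy1
  have hcB : c2 * B ≠ 0 := by
    intro h
    apply hw0
    rw [h0, h, zero_div]
  have hBne : B ≠ 0 := fun h => hcB (by rw [h, mul_zero])
  have hW1e : W1 s1 c1 s2 c2 = s2 * A / (c2 * B) := by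
    rw [W1, h1, h0, div_div_div_cancel_right₀ hD]
  have hW2e : W2 s1 c1 s2 c2 = s2 / B := by
    rw [W2, h2, h0, div_div_div_cancel_right₀ hD]
    rw [mul_comm s2 c2, mul_div_mul_left _ _ hc2]
  have hW3e : W3 s1 c1 s2 c2 = s2 / B := by
    rw [W3, h3, h0, div_div_div_cancel_right₀ hD]
    rw [mul_comm s2 c2, mul_div_mul_left _ _ hc2]
  have hAB : A ^ 2 + B ^ 2 = 1 := by
    rw [hA, hB]
    linear_combination ((s1^2+c1^2+1) * (s2^2+c2^2)) * hpy1 + hpy2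
  have hd : (s2 / B) ^ 2 - 1 ≠ 0 := hW3e ▸ hW3
  refine ⟨?_, ?_, ?_, ?_⟩
  · have hv2 : ((2 : Fin 4) : ℕ) = 2 := rfl
    have hv3 : ((3 : Fin 4) : ℕ) = 3 := rfl
    ext i j
    fin_cases i <;> fin_cases j <;>
      simp [RV8, kron, sigma1, sigma2, sigma3, Matrix.one_apply, hv2, hv3,
        w0, w1, w2, w3, Matrix.add_apply, Matrix.smul_apply] <;>
      ring
  · rw [hW1e, hW2e, hW3e, div_eq_div_iff hd (pow_ne_zero 2 hc2)]
    field_simp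
    linear_combination s2^2 * hAB - s2^2 * hpy2
  · rw [hW1e, hW2e, hW3e, div_eq_iff (hW2e ▸ hW2)]
    field_simp
    linear_combination s2^2 * hpy2 - s2^2 * hAB
  · rw [hW2e, hW3e, sub_self, zero_div]
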